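/- Let ι be a countably infinite set, U a nonprincipal ultrafilter on ι, (K_i)_{i∈ι} a family of fields, and n ∈ ℕ. Let P := ∏_i K_i and Q' := ∏_i K_i[X_1, …, X_n] (product of multivariate polynomial rings), and let I_U ⊆ P and J'_U ⊆ Q' be the ideals of families f with {i : f i = 0} ∈ U; write [·] for residue classes. Then there exists a surjective ring homomorphism π' : Q'/J'_U → (P/I_U)[[X_1, …, X_n]] onto the formal power series ring such that π'([(C(a_i))_i]) = C([a]) for every a = (a_i)_i ∈ P, π'([(X_j)_i]) = X_j for each j, and the kernel of π' equals ⋂_{d∈ℕ} 𝔛^d, where 𝔛 is the ideal of Q'/J'_U generated by the classes of the constant families X_1, …, X_n. -/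

import Mathlib

def ultraIdeal {ι : Type*} (R : ι → Type*) [∀ i, CommRing (R i)] (U : Ultrafilter ι) :
    Ideal (∀ i, R i) where
  carrier := {f | {i | f i = 0} ∈ U}
  zero_mem' := Filter.univ_mem' (fun i => rfl)
  add_mem' := by
    intro f g hf hg
    refine U.toFilter.mem_of_superset (Filter.inter_mem hf hg) ?_
    rintro i ⟨hfi, hgi⟩
    simp only [Set.mem_setOf_eq] at *
    rw [Pi.add_apply, hfi, hgi, add_zero]
  smul_mem' := by
    intro c f hf
    refine U.toFilter.mem_of_superset hf ?_
    intro i hfi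
    simp only [Set.mem_setOf_eq] at *
    rw [smul_eq_mul, Pi.mul_apply, hfi, mul_zero]

theorem mem_ultraIdeal' {ι : Type*} {R : ι → Type*} [∀ i, CommRing (R i)] {U : Ultrafilter ι}
    {f : ∀ i, R i} : f ∈ ultraIdeal R U ↔ {i | f i = 0} ∈ U := Iff.rfl

theorem ultra_mk_eq' {ι : Type*} {R : ι → Type*} [∀ i, CommRing (R i)] {U : Ultrafilter ι}
    {f g : ∀ i, R i} (h : {i | f i = g i} ∈ U) :
    Ideal.Quotient.mk (ultraIdeal R U) f = Ideal.Quotient.mk (ultraIdeal R U) g := by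
  rw [Ideal.Quotient.eq]
  refine U.toFilter.mem_of_superset h ?_
  intro i hi
  simp only [Set.mem_setOf_eq] at *
  rw [Pi.sub_apply, hi, sub_self]

local notation "deg" => fun μ => Finset.sum Finset.univ μ

theorem deg_add' {n : ℕ} (a b : Fin n →₀ ℕ) :
    deg (a + b) = deg a + deg b := by
  simp [Finset.sum_add_distrib]

theorem deg_eq_zero' {n : ℕ} {μ : Fin n →₀ ℕ} (h : deg μ = 0) : μ = 0 := by
  ext j
  have := Finset.sum_eq_zero_iff.mp h j (Finset.mem_univ j)
  simpa using this

theorem deg_single_one' {n : ℕ} (j : Fin n) : deg (Finsupp.single j 1) = 1 := by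
  simp [Finsupp.single_apply, Finset.sum_ite_eq]

theorem exists_le_deg' {n : ℕ} (d : ℕ) (ν : Fin n →₀ ℕ) (h : d ≤ deg ν) :
    ∃ μ : Fin n →₀ ℕ, μ ≤ ν ∧ deg μ = d := by
  induction d with
  | zero => exact ⟨0, zero_le, by simp⟩
  | succ d ih =>
    obtain ⟨μ, hle, hdeg⟩ := ih (le_of_lt (Nat.lt_of_succ_le h))
    have hne : μ ≠ ν := by
      intro hh
      subst hh
      omega
    have : ∃ j, μ j < ν j := by
      by_contra hc
      push_neg at hc
      exact hne (le_antisymm hle fun j => hc j)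
    obtain ⟨j, hj⟩ := this
    refine ⟨μ + Finsupp.single j 1, ?_, by rw [deg_add', hdeg, deg_single_one']⟩
    intro k
    rcases eq_or_ne k j with rfl | hk
    · simpa [Finsupp.single_apply] using hj
    · simp [Finsupp.single_apply, hk.symm, (Finsupp.le_def.mp hle k)]

theorem coeff_span_X_pow' {n : ℕ} {R : Type*} [CommRing R] (d : ℕ)
    (y : MvPowerSeries (Fin n) R)
    (hy : y ∈ (Ideal.span (Set.range (MvPowerSeries.X : Fin n → MvPowerSeries (Fin n) R))) ^ d)
    (μ : Fin n →₀ ℕ) (hμ : deg μ < d) : MvPowerSeries.coeff μ y = 0 := by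
  induction d generalizing y μ with
  | zero => omega
  | succ d ih =>
    rw [pow_succ] at hy
    have key : ∀ μ : Fin n →₀ ℕ, deg μ < d + 1 → MvPowerSeries.coeff μ y = 0 := by
      refine Submodule.mul_induction_on hy ?_ ?_
      · intro x hx z hz μ hμ
        have hz0 : MvPowerSeries.constantCoeff z = 0 := by
          have hle : Ideal.span (Set.range (MvPowerSeries.X : Fin n → MvPowerSeries (Fin n) R)) ≤
              RingHom.ker (MvPowerSeries.constantCoeff) := by
            rw [Ideal.span_le]
            rintro _ ⟨j, rfl⟩
            exact MvPowerSeries.constantCoeff_X j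
          exact hle hz
        rw [MvPowerSeries.coeff_mul]
        refine Finset.sum_eq_zero fun p hp => ?_
        rw [Finset.HasAntidiagonal.mem_antidiagonal] at hp
        rcases eq_or_ne p.2 0 with h2 | h2
        · rw [h2, MvPowerSeries.coeff_zero_eq_constantCoeff, hz0, mul_zero]
        · have h2' : 1 ≤ deg p.2 := by
            rcases Nat.eq_zero_or_pos (deg p.2) with h | h
            · exact absurd (deg_eq_zero' h) h2
            · exact h
          have hlt : deg p.1 < d := by
            have := deg_add' p.1 p.2
            rw [hp] at this
            omega
          rw [ih x hx p.1 hlt, zero_mul]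
      · intro x z ihx ihz μ hμ
        rw [map_add, ihx μ hμ, ihz μ hμ, add_zero]
    exact key μ hμ

noncomputable def degFinset (n d : ℕ) : Finset (Fin n →₀ ℕ) :=
  (Finset.Iic (Finsupp.equivFunOnFinite.symm fun _ => d)).filter (fun μ => deg μ = d)

theorem mem_degFinset {n d : ℕ} (μ : Fin n →₀ ℕ) (h : deg μ = d) : μ ∈ degFinset n d := by
  rw [degFinset, Finset.mem_filter, Finset.mem_Iic]
  refine ⟨fun j => ?_, h⟩
  show μ j ≤ Finsupp.equivFunOnFinite.symm (fun _ => d) j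
  have : μ j ≤ deg μ := Finset.single_le_sum (fun k _ => Nat.zero_le _) (Finset.mem_univ j)
  simp only [Finsupp.equivFunOnFinite_symm_apply_apply]
  omega

theorem deg_of_mem_degFinset {n d : ℕ} {μ : Fin n →₀ ℕ} (h : μ ∈ degFinset n d) : deg μ = d :=
  (Finset.mem_filter.mp h).2

theorem mem_span_monomials' {n : ℕ} {R : Type*} [CommRing R] (d : ℕ)
    (p : MvPolynomial (Fin n) R)
    (hp : ∀ μ : Fin n →₀ ℕ, deg μ < d → MvPolynomial.coeff μ p = 0) :
    p ∈ Ideal.span ((fun μ => (MvPolynomial.monomial μ (1 : R))) ''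
      (degFinset n d : Set (Fin n →₀ ℕ))) := by
  rw [MvPolynomial.as_sum p]
  refine Ideal.sum_mem _ fun ν hν => ?_
  have hd : d ≤ deg ν := by
    by_contra hc
    push_neg at hc
    exact (MvPolynomial.mem_support_iff.mp hν) (hp ν hc)
  obtain ⟨μ, hle, hdeg⟩ := exists_le_deg' d ν hd
  have key : (MvPolynomial.monomial ν) (MvPolynomial.coeff ν p) =
      (MvPolynomial.monomial (ν - μ)) (MvPolynomial.coeff ν p) * (MvPolynomial.monomial μ) 1 := by
    rw [MvPolynomial.monomial_mul, mul_one, tsub_add_cancel_of_le hle]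
  rw [key]
  refine Ideal.mul_mem_left _ _ (Ideal.subset_span ?_)
  exact Set.mem_image_of_mem _ (mem_degFinset μ hdeg)

theorem prod_pow_mem_pow' {A : Type*} [CommRing A] (I : Ideal A) {n : ℕ} (x : Fin n → A)
    (hx : ∀ j, x j ∈ I) (μ : Fin n →₀ ℕ) : (∏ j, x j ^ μ j) ∈ I ^ (deg μ) := by
  classical
  have : ∀ s : Finset (Fin n), (∏ j ∈ s, x j ^ μ j) ∈ I ^ (∑ j ∈ s, μ j) := by
    intro s
    induction s using Finset.induction_on with
    | empty => simp
    | @insert a s' hj ih =>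
      rw [Finset.prod_insert hj, Finset.sum_insert hj, pow_add]
      exact Ideal.mul_mem_mul (Ideal.pow_mem_pow (hx a) _) ih
  exact this Finset.univ

set_option synthInstance.maxHeartbeats 1000000 in
set_option maxHeartbeats 2000000 in
noncomputable def ultraPhi {ι : Type} (U : Ultrafilter ι) (K : ι → Type) [∀ i, Field (K i)]
    (n : ℕ) :
    (∀ i, MvPolynomial (Fin n) (K i)) →+* MvPowerSeries (Fin n) ((∀ i, K i) ⧸ ultraIdeal K U) where
  toFun f := fun μ => Ideal.Quotient.mk (ultraIdeal K U) (fun i => MvPolynomial.coeff μ (f i))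
  map_one' := by
    funext μ
    show Ideal.Quotient.mk _ _ = MvPowerSeries.coeff μ 1
    rw [MvPowerSeries.coeff_one]
    simp only [Pi.one_apply]
    split_ifs with h
    · subst h
      simp only [MvPolynomial.coeff_zero_one]
      exact map_one _
    · have : (fun i => MvPolynomial.coeff μ (1 : MvPolynomial (Fin n) (K i))) =
          (0 : ∀ i, K i) := by
        funext i; rw [MvPolynomial.coeff_one, if_neg (Ne.symm h)]; rfl
      rw [this, map_zero]
  map_mul' f g := by
    refine MvPowerSeries.ext fun μ => ?_
    show Ideal.Quotient.mk _ _ = _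
    erw [MvPowerSeries.coeff_mul]
    simp only [Pi.mul_apply]
    have : (fun i => MvPolynomial.coeff μ (f i * g i)) =
        ∑ p ∈ Finset.HasAntidiagonal.antidiagonal μ, ((fun i => MvPolynomial.coeff p.1 (f i)) *
          (fun i => MvPolynomial.coeff p.2 (g i))) := by
      funext i
      rw [Finset.sum_apply]
      exact MvPolynomial.coeff_mul (f _) (g _) μ
    rw [this, map_sum]
    exact Finset.sum_congr rfl fun p _ => map_mul _ _ _
  map_zero' := by
    funext μ
    show Ideal.Quotient.mk _ _ = MvPowerSeries.coeff μ 0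
    simp only [Pi.zero_apply, MvPolynomial.coeff_zero]
    rw [show (fun _ : ι => (0 : K _)) = (0 : ∀ i, K i) from rfl, map_zero, map_zero]
  map_add' f g := by
    refine MvPowerSeries.ext fun μ => ?_
    show Ideal.Quotient.mk _ _ = _
    simp only [Pi.add_apply]
    have : (fun i => MvPolynomial.coeff μ (f i + g i)) =
        (fun i => MvPolynomial.coeff μ (f i)) + (fun i => MvPolynomial.coeff μ (g i)) := by
      funext i
      exact MvPolynomial.coeff_add μ (f i) (g i)
    erw [this, map_add]

theorem coeff_ultraPhi {ι : Type} (U : Ultrafilter ι) (K : ι → Type) [∀ i, Field (K i)]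
    (n : ℕ) (f : ∀ i, MvPolynomial (Fin n) (K i)) (μ : Fin n →₀ ℕ) :
    MvPowerSeries.coeff μ (ultraPhi U K n f) =
      Ideal.Quotient.mk (ultraIdeal K U) (fun i => MvPolynomial.coeff μ (f i)) := rfl

set_option synthInstance.maxHeartbeats 1000000 in
set_option maxHeartbeats 2000000 in
theorem stmt9 {ι : Type} [Countable ι] [Infinite ι] (U : Ultrafilter ι)
    (hU : ∀ s : Set ι, s.Finite → s ∉ U)
    (K : ι → Type) [∀ i, Field (K i)] (n : ℕ) :
    letI P := ∀ i, K i
    letI Q' := ∀ i, MvPolynomial (Fin n) (K i)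
    letI IU := ultraIdeal K U
    letI JU' := ultraIdeal (fun i => MvPolynomial (Fin n) (K i)) U
    letI 𝔛 : Ideal (Q' ⧸ JU') := Ideal.span
      (Set.range fun j : Fin n =>
        Ideal.Quotient.mk JU' (fun i => (MvPolynomial.X j : MvPolynomial (Fin n) (K i))))
    ∃ π' : (Q' ⧸ JU') →+* MvPowerSeries (Fin n) (P ⧸ IU),
      Function.Surjective π' ∧
      (∀ a : P, π' (Ideal.Quotient.mk JU' (fun i => MvPolynomial.C (a i))) =
        (MvPowerSeries.C : (P ⧸ IU) →+* MvPowerSeries (Fin n) (P ⧸ IU)) (Ideal.Quotient.mk IU a)) ∧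
      (∀ j : Fin n, π' (Ideal.Quotient.mk JU'
          (fun i => (MvPolynomial.X j : MvPolynomial (Fin n) (K i)))) =
        MvPowerSeries.X j) ∧
      RingHom.ker π' = ⨅ d : ℕ, 𝔛 ^ d := by
  classical
  set JU' := ultraIdeal (fun i => MvPolynomial (Fin n) (K i)) U with hJU'
  have hker : ∀ f ∈ JU', ultraPhi U K n f = 0 := by
    intro f hf
    funext μ
    show Ideal.Quotient.mk _ _ = MvPowerSeries.coeff μ 0
    rw [map_zero]
    rw [Ideal.Quotient.eq_zero_iff_mem]
    refine U.toFilter.mem_of_superset hf ?_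
    intro i hi
    simp only [Set.mem_setOf_eq] at *
    rw [hi, MvPolynomial.coeff_zero]
  have hXlem : ∀ j : Fin n, Ideal.Quotient.lift JU' (ultraPhi U K n) hker
      (Ideal.Quotient.mk JU' (fun i => (MvPolynomial.X j : MvPolynomial (Fin n) (K i)))) =
      MvPowerSeries.X j := by
    intro j
    rw [Ideal.Quotient.lift_mk]
    refine MvPowerSeries.ext fun μ => ?_
    rw [coeff_ultraPhi, MvPowerSeries.coeff_X]
    split_ifs with h
    · subst h
      have : (fun i => MvPolynomial.coeff (Finsupp.single j 1)
          (MvPolynomial.X j : MvPolynomial (Fin n) (K i))) = (1 : ∀ i, K i) := by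
        funext i
        rw [MvPolynomial.coeff_X]
        rw [if_pos rfl]; rfl
      rw [this, map_one]
    · have : (fun i => MvPolynomial.coeff μ
          (MvPolynomial.X j : MvPolynomial (Fin n) (K i))) = (0 : ∀ i, K i) := by
        funext i
        rw [MvPolynomial.coeff_X', if_neg (fun hh => h hh.symm)]
        rfl
      rw [this, map_zero]
  refine ⟨Ideal.Quotient.lift JU' (ultraPhi U K n) hker, ?_, ?_, ?_, ?_⟩
  · -- surjectivity
    intro g
    choose a ha using fun μ : Fin n →₀ ℕ =>
      Ideal.Quotient.mk_surjective (I := ultraIdeal K U) (MvPowerSeries.coeff μ g)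
    obtain ⟨e, he⟩ := (countable_iff_exists_injective ι).mp inferInstance
    have hcof : ∀ N : ℕ, {i | N ≤ e i} ∈ U := by
      intro N
      have hfin : {i | e i < N}.Finite :=
        Set.Finite.preimage (he.injOn) (Set.finite_Iio N)
      have h1 : {i | e i < N}ᶜ ∈ U := Ultrafilter.compl_mem_iff_notMem.mpr (hU _ hfin)
      convert h1 using 1
      ext i
      simp [not_lt]
    refine ⟨Ideal.Quotient.mk JU' (fun i =>
      ∑ ν ∈ Finset.Iic (Finsupp.equivFunOnFinite.symm fun _ => e i),
        MvPolynomial.monomial ν (a ν i)), ?_⟩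
    rw [Ideal.Quotient.lift_mk]
    funext μ
    show MvPowerSeries.coeff μ (ultraPhi U K n _) = MvPowerSeries.coeff μ g
    rw [coeff_ultraPhi, ← ha μ]
    apply ultra_mk_eq'
    refine U.toFilter.mem_of_superset (hcof (deg μ)) ?_
    intro i hi
    simp only [Set.mem_setOf_eq] at *
    rw [MvPolynomial.coeff_sum]
    simp only [MvPolynomial.coeff_monomial]
    rw [Finset.sum_ite_eq']
    rw [if_pos]
    rw [Finset.mem_Iic]
    intro j
    have h1 : μ j ≤ deg μ := Finset.single_le_sum (fun k _ => Nat.zero_le _) (Finset.mem_univ j)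
    show μ j ≤ Finsupp.equivFunOnFinite.symm (fun _ => e i) j
    simp only [Finsupp.equivFunOnFinite_symm_apply_apply]
    exact le_trans h1 hi
  · -- constants
    intro a
    rw [Ideal.Quotient.lift_mk]
    refine MvPowerSeries.ext fun μ => ?_
    rw [coeff_ultraPhi, MvPowerSeries.coeff_C]
    split_ifs with h
    · subst h
      simp only [MvPolynomial.coeff_zero_C]
    · have : (fun i => MvPolynomial.coeff μ (MvPolynomial.C (a i))) = (0 : ∀ i, K i) := by
        funext i
        rw [MvPolynomial.coeff_C, if_neg (Ne.symm h)]
        rfl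
      rw [this, map_zero]
  · -- variables
    exact hXlem
  · -- kernel
    apply le_antisymm
    · -- ker ≤ ⨅ 𝔛^d
      intro x hx
      rw [Submodule.mem_iInf]
      intro d
      obtain ⟨f, rfl⟩ := Ideal.Quotient.mk_surjective x
      rw [RingHom.mem_ker, Ideal.Quotient.lift_mk] at hx
      have hcoef : ∀ μ : Fin n →₀ ℕ, {i | MvPolynomial.coeff μ (f i) = 0} ∈ U := by
        intro μ
        have h0 : MvPowerSeries.coeff μ (ultraPhi U K n f) = 0 := by rw [hx, map_zero]
        rw [coeff_ultraPhi, Ideal.Quotient.eq_zero_iff_mem] at h0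
        exact h0
      set T : Finset (Fin n →₀ ℕ) := Finset.Iic (Finsupp.equivFunOnFinite.symm fun _ => d)
        with hT
      set A : Set ι := ⋂ μ ∈ T, {i | MvPolynomial.coeff μ (f i) = 0} with hA
      have hAU : A ∈ U := (Filter.biInter_finset_mem T).mpr fun μ _ => hcoef μ
      set g : ∀ i, MvPolynomial (Fin n) (K i) := fun i => if i ∈ A then f i else 0 with hg
      have hfg : Ideal.Quotient.mk JU' f = Ideal.Quotient.mk JU' g := by
        apply ultra_mk_eq'
        refine U.toFilter.mem_of_superset hAU ?_
        intro i hi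
        simp only [Set.mem_setOf_eq, hg, if_pos hi]
      rw [hfg]
      have hlow : ∀ i, ∀ μ : Fin n →₀ ℕ, deg μ < d → MvPolynomial.coeff μ (g i) = 0 := by
        intro i μ hμ
        by_cases hi : i ∈ A
        · simp only [hg, if_pos hi]
          have hμT : μ ∈ T := by
            rw [hT, Finset.mem_Iic]
            intro j
            have h1 : μ j ≤ deg μ :=
              Finset.single_le_sum (fun k _ => Nat.zero_le _) (Finset.mem_univ j)
            show μ j ≤ Finsupp.equivFunOnFinite.symm (fun _ => d) j
            simp only [Finsupp.equivFunOnFinite_symm_apply_apply]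
            omega
          have := Set.mem_iInter₂.mp (hA ▸ hi) μ hμT
          exact this
        · simp [hg, if_neg hi]
      have hdecomp : ∀ i, ∃ h : (Fin n →₀ ℕ) → MvPolynomial (Fin n) (K i),
          g i = ∑ μ ∈ degFinset n d, h μ * MvPolynomial.monomial μ 1 := by
        intro i
        have hmem := mem_span_monomials' d (g i) (hlow i)
        rw [Ideal.span, ← Finset.coe_image] at hmem
        obtain ⟨c, -, hc⟩ := Submodule.mem_span_finset.mp hmem
        refine ⟨fun μ => c (MvPolynomial.monomial μ 1), ?_⟩
        rw [← hc, Finset.sum_image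
          (fun a _ b _ hab => MvPolynomial.monomial_left_injective one_ne_zero hab)]
        simp [smul_eq_mul]
      choose h hh using hdecomp
      have hgsum : g = ∑ μ ∈ degFinset n d,
          ((fun i => h i μ) * (fun i => MvPolynomial.monomial μ (1 : K i))) := by
        funext i
        rw [Finset.sum_apply]
        simp only [Pi.mul_apply]
        exact hh i
      rw [hgsum, map_sum]
      refine Ideal.sum_mem _ fun μ hμ => ?_
      rw [map_mul]
      refine Ideal.mul_mem_left _ _ ?_
      have hmono : (fun i => (MvPolynomial.monomial μ (1 : K i))) =
          ∏ j : Fin n,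
            (fun i => (MvPolynomial.X j : MvPolynomial (Fin n) (K i))) ^ (μ j) := by
        funext i
        rw [Finset.prod_apply]
        rw [MvPolynomial.monomial_eq, map_one, one_mul]
        rw [Finsupp.prod_fintype]
        · rfl
        · intro j; exact pow_zero _
      rw [hmono, map_prod]
      rw [← deg_of_mem_degFinset hμ]
      exact prod_pow_mem_pow' _
        (fun j => Ideal.Quotient.mk JU' (fun i => MvPolynomial.X j))
        (fun j => Ideal.subset_span (Set.mem_range_self j)) μ
    · -- ⨅ 𝔛^d ≤ ker
      intro x hx
      rw [Submodule.mem_iInf] at hx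
      rw [RingHom.mem_ker]
      refine MvPowerSeries.ext fun μ => ?_
      rw [map_zero]
      have hx' := hx (deg μ + 1)
      have hmapX : Ideal.map (Ideal.Quotient.lift JU' (ultraPhi U K n) hker)
          (Ideal.span (Set.range fun j : Fin n =>
            Ideal.Quotient.mk JU' (fun i => (MvPolynomial.X j : MvPolynomial (Fin n) (K i))))) =
          Ideal.span (Set.range (MvPowerSeries.X :
            Fin n → MvPowerSeries (Fin n) ((∀ i, K i) ⧸ ultraIdeal K U))) := by
        rw [Ideal.map_span, ← Set.range_comp]
        have hco : (Ideal.Quotient.lift JU' (ultraPhi U K n) hker ∘ fun j : Fin n =>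
            Ideal.Quotient.mk JU' (fun i => (MvPolynomial.X j : MvPolynomial (Fin n) (K i)))) =
            (MvPowerSeries.X : Fin n → MvPowerSeries (Fin n) ((∀ i, K i) ⧸ ultraIdeal K U)) :=
          funext fun j => hXlem j
        rw [hco]
      have hmem : Ideal.Quotient.lift JU' (ultraPhi U K n) hker x ∈
          (Ideal.span (Set.range (MvPowerSeries.X :
            Fin n → MvPowerSeries (Fin n) ((∀ i, K i) ⧸ ultraIdeal K U)))) ^ (deg μ + 1) := by
        have := Ideal.mem_map_of_mem (Ideal.Quotient.lift JU' (ultraPhi U K n) hker) hx'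
        rwa [Ideal.map_pow, hmapX] at this
      exact coeff_span_X_pow' _ _ hmem μ (by omega)
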